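/- For every integer c ≥ 1 and every integer n ≥ 5(c+1)², setting q = 3n − c and t = 3c, one has 1 ≤ t ≤ n − 1 and ((q + 2t)(q − n − 1)/n − 2q)·(n − t)/(4nt) > 2 − (q − n − 1)/n. (This is case 3) in the paper's list of situations where condition (*) holds, which yields the paper's Corollary 4 from Theorem 3 with p = 1.) -/
import Mathlib


/-- Case 3) of the paper's list: for `c ≥ 1`, `n ≥ 5(c + 1)²`, `q = 3n - c` and `t = 3c`,
one has `1 ≤ t ≤ n - 1` and condition (*) holds. -/
theorem stmt_14 (c n q : ℕ) (hc : 1 ≤ c) (hn : 5 * (c + 1) ^ 2 ≤ n) (hq : q + c = 3 * n) :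
    (1 ≤ 3 * c ∧ 3 * c ≤ n - 1) ∧
      (((q : ℝ) + 2 * (3 * c)) * ((q : ℝ) - n - 1) / n - 2 * q) *
          ((n : ℝ) - 3 * c) / (4 * n * (3 * c))
        > 2 - ((q : ℝ) - n - 1) / n := by
  have hn20 : 20 ≤ n := le_trans (by nlinarith) hn
  constructor
  · refine ⟨by omega, ?_⟩
    have : 3 * c + 1 ≤ n := le_trans (by nlinarith) hn
    omega
  · have hcR : (1 : ℝ) ≤ c := by exact_mod_cast hc
    have hnR : (20 : ℝ) ≤ n := by exact_mod_cast hn20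
    have hnR' : (5 : ℝ) * (c + 1) ^ 2 ≤ n := by exact_mod_cast hn
    have hqR : (q : ℝ) = 3 * n - c := by
      have : (q : ℝ) + c = 3 * n := by exact_mod_cast hq
      linarith
    rw [hqR, gt_iff_lt, ← sub_pos]
    have hnpos : (0 : ℝ) < n := by linarith
    have hcpos : (0 : ℝ) < c := by linarith
    have key : ((3 * (n:ℝ) * (3 * c - 1) - 5 * c * (c + 1)) * (n - 3 * c)
        - 12 * n * c * (c + 1)) > 0 := by
      have h1 : (0:ℝ) ≤ n - 5 * (c + 1) ^ 2 := by linarith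
      have h2 : (0:ℝ) ≤ c - 1 := by linarith
      nlinarith [mul_nonneg h1 h1, mul_nonneg h1 h2, mul_nonneg h2 h2,
        mul_nonneg (mul_nonneg h2 h2) h2, mul_nonneg h1 (mul_nonneg h2 h2),
        mul_nonneg (mul_nonneg h2 h2) (mul_nonneg h2 h2), mul_nonneg (mul_nonneg h1 h2) h2]
    have h12 : (0 : ℝ) < 12 * n ^ 2 * c := by positivity
    rw [show (((3 * (n:ℝ) - c) + 2 * (3 * c)) * ((3 * n - c) - n - 1) / n - 2 * (3 * n - c)) *
          ((n : ℝ) - 3 * c) / (4 * n * (3 * c)) - (2 - (((3 * n - c) : ℝ) - n - 1) / n)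
        = ((3 * (n:ℝ) * (3 * c - 1) - 5 * c * (c + 1)) * (n - 3 * c)
            - 12 * n * c * (c + 1)) / (12 * n ^ 2 * c) by field_simp; ring]
    positivity
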